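/- arXiv:math/0309405 — 2 statements merged into one kernel-verified Lean document; each statement's English description precedes it below -/
import Mathlib

section
/- Let (E_j) be a sequence of Banach spaces each having the W.A.P. with a common uniform constant C. Then the ℓ¹-direct sum ℓ¹(E_j) has the W.A.P. -/
open Filter Topology

/-- A set is weakly compact if it is compact in the weak topology. -/
def IsWeaklyCompact {E : Type*} [NormedAddCommGroup E] [NormedSpace ℝ E] (D : Set E) : Prop :=
  IsCompact (toWeakSpace ℝ E '' D)

/-- An operator is weakly compact if the image of the closed unit ball is relatively
compact in the weak topology. -/
def IsWeaklyCompactOp {E F : Type*} [NormedAddCommGroup E] [NormedSpace ℝ E]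
    [NormedAddCommGroup F] [NormedSpace ℝ F] (V : E →L[ℝ] F) : Prop :=
  IsCompact (closure (toWeakSpace ℝ F '' (V '' Metric.closedBall 0 1)))

/-- `E` has the W.A.P. with constant `C`. -/
def HasWAPWith (E : Type*) [NormedAddCommGroup E] [NormedSpace ℝ E] (C : ℝ) : Prop :=
  ∀ D : Set E, IsWeaklyCompact D → ∀ ε : ℝ, 0 < ε →
    ∃ V : E →L[ℝ] E, IsWeaklyCompactOp V ∧ ‖V‖ ≤ C ∧ ∀ x ∈ D, ‖x - V x‖ < ε

instance : Fact ((1 : ENNReal) ≤ 1) := ⟨le_rfl⟩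

section Aux
open Pointwise
set_option linter.unusedSectionVars false
set_option maxHeartbeats 1000000

private def sumSets {Y : Type*} [AddCommMonoid Y] (S : ℕ → Set Y) : ℕ → Set Y
  | 0 => {0}
  | m+1 => sumSets S m + S m

instance weakT2 (Y : Type*) [NormedAddCommGroup Y] [NormedSpace ℝ Y] :
    T2Space (WeakSpace ℝ Y) := by
  refine (WeakBilin.isEmbedding (B := (topDualPairing ℝ Y).flip) ?_).t2Space
  intro x y hxy
  by_contra hne
  obtain ⟨f, hf⟩ := SeparatingDual.exists_separating_of_ne (R := ℝ) hne
  have : (topDualPairing ℝ Y).flip x f = (topDualPairing ℝ Y).flip y f := by rw [hxy]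
  exact hf (by simpa [topDualPairing] using this)

variable {E : ℕ → Type*} [∀ j, NormedAddCommGroup (E j)] [∀ j, NormedSpace ℝ (E j)]

theorem hasSum_norm1 (f : lp E 1) : HasSum (fun j => ‖f j‖) ‖f‖ := by
  have := lp.hasSum_norm (p := 1) (by norm_num) f
  simpa using this

theorem summable_norm1 (f : lp E 1) : Summable (fun j => ‖f j‖) := (hasSum_norm1 f).summable

noncomputable def tl (f : lp E 1) (N : ℕ) : ℝ := ∑' j, ‖f (j + N)‖

theorem sum_range_add_tl (f : lp E 1) (N : ℕ) :
    ∑ j ∈ Finset.range N, ‖f j‖ + tl f N = ‖f‖ := by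
  rw [tl, Summable.sum_add_tsum_nat_add N (summable_norm1 f), (hasSum_norm1 f).tsum_eq]

noncomputable def projCLM (j : ℕ) : lp E 1 →L[ℝ] E j :=
  LinearMap.mkContinuous
    { toFun := fun f => f j
      map_add' := fun f g => by simp [lp.coeFn_add]
      map_smul' := fun c f => by simp [lp.coeFn_smul] } 1
    (fun f => by rw [one_mul]; exact lp.norm_apply_le_norm (by norm_num) f j)

@[simp] theorem projCLM_apply (j : ℕ) (f : lp E 1) : projCLM j f = f j := rfl

noncomputable def inclCLM (j : ℕ) : E j →L[ℝ] lp E 1 :=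
  LinearMap.mkContinuous
    { toFun := fun a => lp.single 1 j a
      map_add' := fun a b => by
        refine lp.ext (funext fun k => ?_)
        by_cases hk : k = j
        · subst hk
          rw [lp.single_apply_self]
          have : ((lp.single 1 k a + lp.single 1 k b : lp E 1) : ∀ i, E i) k
              = lp.single 1 k a k + lp.single 1 k b k := by rw [lp.coeFn_add]; rfl
          rw [this, lp.single_apply_self, lp.single_apply_self]
        · rw [lp.single_apply_ne _ _ _ hk]
          have : ((lp.single 1 j a + lp.single 1 j b : lp E 1) : ∀ i, E i) k
              = lp.single 1 j a k + lp.single 1 j b k := by rw [lp.coeFn_add]; rfl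
          rw [this, lp.single_apply_ne _ _ _ hk, lp.single_apply_ne _ _ _ hk, add_zero]
      map_smul' := fun c a => by simp } 1
    (fun a => by
      have h := lp.norm_single (p := 1) (E := E) (by norm_num)
        j a
      rw [one_mul]
      exact le_of_eq h)

@[simp] theorem inclCLM_apply (j : ℕ) (a : E j) : inclCLM j a = lp.single 1 j a := rfl

theorem tl_nonneg (f : lp E 1) (N : ℕ) : 0 ≤ tl f N :=
  tsum_nonneg fun _ => norm_nonneg _

theorem summable_shift (f : lp E 1) (N : ℕ) : Summable fun j => ‖f (j + N)‖ :=
  (summable_nat_add_iff N).2 (summable_norm1 f)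

theorem tl_anti (f : lp E 1) : Antitone (tl f) := by
  intro N M h
  have h1 := sum_range_add_tl f N
  have h2 := sum_range_add_tl f M
  have : ∑ j ∈ Finset.range N, ‖f j‖ ≤ ∑ j ∈ Finset.range M, ‖f j‖ :=
    Finset.sum_le_sum_of_subset_of_nonneg (Finset.range_subset_range.2 h)
      (fun _ _ _ => norm_nonneg _)
  linarith

theorem tl_tendsto (f : lp E 1) : Tendsto (tl f) atTop (𝓝 0) :=
  tendsto_sum_nat_add fun j => ‖f j‖

theorem sum_Ico_eq_tl (f : lp E 1) {N M : ℕ} (h : N ≤ M) :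
    ∑ j ∈ Finset.Ico N M, ‖f j‖ = tl f N - tl f M := by
  have h1 := sum_range_add_tl f N
  have h2 := sum_range_add_tl f M
  have := Finset.sum_Ico_eq_sub (fun j => ‖f j‖) h
  rw [this]; linarith

theorem norm_dual_apply_le (ψ : ∀ j, E j →L[ℝ] ℝ) (hψ : ∀ j, ‖ψ j‖ ≤ 1) (f : lp E 1) (j : ℕ) :
    ‖ψ j (f j)‖ ≤ ‖f j‖ := by
  calc ‖ψ j (f j)‖ ≤ ‖ψ j‖ * ‖f j‖ := (ψ j).le_opNorm _
  _ ≤ 1 * ‖f j‖ := by gcongr; exact hψ j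
  _ = ‖f j‖ := one_mul _

theorem summable_dual_apply (ψ : ∀ j, E j →L[ℝ] ℝ) (hψ : ∀ j, ‖ψ j‖ ≤ 1) (f : lp E 1) :
    Summable fun j => ψ j (f j) :=
  Summable.of_norm_bounded (summable_norm1 f) (norm_dual_apply_le ψ hψ f)

theorem summable_dual_norm (ψ : ∀ j, E j →L[ℝ] ℝ) (hψ : ∀ j, ‖ψ j‖ ≤ 1) (f : lp E 1) :
    Summable fun j => ‖ψ j (f j)‖ :=
  Summable.of_nonneg_of_le (fun _ => norm_nonneg _) (norm_dual_apply_le ψ hψ f)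
    (summable_norm1 f)

theorem tsum_dual_apply_le (ψ : ∀ j, E j →L[ℝ] ℝ) (hψ : ∀ j, ‖ψ j‖ ≤ 1) (f : lp E 1) :
    ‖∑' j, ψ j (f j)‖ ≤ ‖f‖ := by
  calc ‖∑' j, ψ j (f j)‖ ≤ ∑' j, ‖ψ j (f j)‖ :=
        norm_tsum_le_tsum_norm (summable_dual_norm ψ hψ f)
  _ ≤ ∑' j, ‖f j‖ := by
      refine Summable.tsum_le_tsum (fun j => ?_) (summable_dual_norm ψ hψ f) (summable_norm1 f)
      exact norm_dual_apply_le ψ hψ f j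
  _ = ‖f‖ := (hasSum_norm1 f).tsum_eq

noncomputable def Phi (ψ : ∀ j, E j →L[ℝ] ℝ) (hψ : ∀ j, ‖ψ j‖ ≤ 1) : lp E 1 →L[ℝ] ℝ :=
  LinearMap.mkContinuous
    { toFun := fun f => ∑' j, ψ j (f j)
      map_add' := fun f g => by
        rw [← Summable.tsum_add (summable_dual_apply ψ hψ f) (summable_dual_apply ψ hψ g)]
        exact tsum_congr fun j => by
          have : (↑(f + g) : ∀ j, E j) j = f j + g j := by rw [lp.coeFn_add]; rfl
          rw [this, map_add]
      map_smul' := fun c f => by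
        simp only [RingHom.id_apply, smul_eq_mul, ← tsum_mul_left]
        exact tsum_congr fun j => by
          have : (↑(c • f) : ∀ j, E j) j = c • f j := by rw [lp.coeFn_smul]; rfl
          rw [this, map_smul]; simp } 1
    (fun f => by rw [one_mul]; exact tsum_dual_apply_le ψ hψ f)

theorem Phi_apply (ψ : ∀ j, E j →L[ℝ] ℝ) (hψ : ∀ j, ‖ψ j‖ ≤ 1) (f : lp E 1) :
    Phi ψ hψ f = ∑' j, ψ j (f j) := rfl

theorem phi_abs_le_tl (ψ : ∀ j, E j →L[ℝ] ℝ) (hψ : ∀ j, ‖ψ j‖ ≤ 1) {N : ℕ}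
    (hz : ∀ j, j < N → ψ j = 0) (f : lp E 1) : |Phi ψ hψ f| ≤ tl f N := by
  rw [Phi_apply]
  have h1 : |∑' j, ψ j (f j)| ≤ ∑' j, ‖ψ j (f j)‖ := by
    rw [← Real.norm_eq_abs]
    exact norm_tsum_le_tsum_norm (summable_dual_norm ψ hψ f)
  have h2 : ∑' j, ‖ψ j (f j)‖
      = ∑ j ∈ Finset.range N, ‖ψ j (f j)‖ + ∑' j, ‖ψ (j + N) (f (j + N))‖ :=
    (Summable.sum_add_tsum_nat_add N (summable_dual_norm ψ hψ f)).symm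
  have h3 : ∑ j ∈ Finset.range N, ‖ψ j (f j)‖ = 0 := by
    refine Finset.sum_eq_zero fun j hj => ?_
    rw [hz j (Finset.mem_range.1 hj)]; simp
  have h4 : ∑' j, ‖ψ (j + N) (f (j + N))‖ ≤ ∑' j, ‖f (j + N)‖ := by
    refine Summable.tsum_le_tsum (fun j => norm_dual_apply_le ψ hψ f (j + N))
      ((summable_nat_add_iff N).2 (summable_dual_norm ψ hψ f)) (summable_shift f N)
  calc |∑' j, ψ j (f j)| ≤ ∑' j, ‖ψ j (f j)‖ := h1
  _ = 0 + ∑' j, ‖ψ (j + N) (f (j + N))‖ := by rw [h2, h3]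
  _ ≤ tl f N := by rw [zero_add]; exact h4

theorem phi_eq_sum (ψ : ∀ j, E j →L[ℝ] ℝ) (hψ : ∀ j, ‖ψ j‖ ≤ 1) {s : Finset ℕ}
    (hz : ∀ j ∉ s, ψ j = 0) (f : lp E 1) : Phi ψ hψ f = ∑ j ∈ s, ψ j (f j) := by
  rw [Phi_apply]
  exact tsum_eq_sum fun j hj => by rw [hz j hj]; simp

theorem abs_sum_dual_le (ψ : ∀ j, E j →L[ℝ] ℝ) (hψ : ∀ j, ‖ψ j‖ ≤ 1) (s : Finset ℕ)
    (f : lp E 1) : |∑ j ∈ s, ψ j (f j)| ≤ ∑ j ∈ s, ‖f j‖ := by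
  calc |∑ j ∈ s, ψ j (f j)| ≤ ∑ j ∈ s, |ψ j (f j)| := Finset.abs_sum_le_sum_abs _ _
  _ ≤ ∑ j ∈ s, ‖f j‖ := Finset.sum_le_sum fun j _ => by
      rw [← Real.norm_eq_abs]; exact norm_dual_apply_le ψ hψ f j

open Classical in
noncomputable def mkg (ψ : ∀ j, E j →L[ℝ] ℝ) : lp E 1 →L[ℝ] ℝ :=
  if h : ∀ j, ‖ψ j‖ ≤ 1 then Phi ψ h else 0

theorem mkg_of (ψ : ∀ j, E j →L[ℝ] ℝ) (h : ∀ j, ‖ψ j‖ ≤ 1) : mkg ψ = Phi ψ h := by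
  unfold mkg; exact dif_pos h

theorem weak_eval_continuous' {Y : Type*} [NormedAddCommGroup Y] [NormedSpace ℝ Y]
    (g : Y →L[ℝ] ℝ) : Continuous fun w : WeakSpace ℝ Y => g ((toWeakSpace ℝ Y).symm w) :=
  WeakBilin.eval_continuous (topDualPairing ℝ Y).flip g

theorem unif_tail (D : Set (lp E 1)) (hc : IsWeaklyCompact D) {ε : ℝ} (hε : 0 < ε) :
    ∃ N, ∀ x ∈ D, tl x N < ε := by
  by_contra hcon
  push_neg at hcon
  set δ : ℝ := ε / 9 with hδdef
  have hδpos : 0 < δ := by positivity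
  set K : Set (WeakSpace ℝ (lp E 1)) := toWeakSpace ℝ (lp E 1) '' D with hK
  set A : ℕ → Set (lp E 1) := fun N => {x | x ∈ D ∧ ε ≤ tl x N} with hA
  set F : ℕ → Set (WeakSpace ℝ (lp E 1)) :=
    fun N => closure (toWeakSpace ℝ (lp E 1) '' A N) with hF
  have hFsub : ∀ N, F N ⊆ K :=
    fun N => closure_minimal (Set.image_mono fun x hx => hx.1) hc.isClosed
  have hFanti : ∀ N, F (N + 1) ⊆ F N := by
    intro N
    refine closure_mono (Set.image_mono fun x hx => ⟨hx.1, ?_⟩)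
    exact le_trans hx.2 (tl_anti x (Nat.le_succ N))
  have hFne : ∀ N, (F N).Nonempty := by
    intro N
    obtain ⟨x, hxD, hxt⟩ := hcon N
    exact ⟨toWeakSpace ℝ (lp E 1) x, subset_closure ⟨x, ⟨hxD, hxt⟩, rfl⟩⟩
  have hFclosed : ∀ N, IsClosed (F N) := fun N => isClosed_closure
  have hF0comp : IsCompact (F 0) :=
    hc.of_isClosed_subset (hFclosed 0) (hFsub 0)
  obtain ⟨w, hw⟩ := IsCompact.nonempty_iInter_of_sequence_nonempty_isCompact_isClosed
    F hFanti hFne hF0comp hFclosed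
  have hwF : ∀ N, w ∈ F N := fun N => Set.mem_iInter.1 hw N
  obtain ⟨xstar, hxstarD, hxstarw⟩ : ∃ x ∈ D, toWeakSpace ℝ (lp E 1) x = w := by
    obtain ⟨x, hxD, hxw⟩ := hFsub 0 (hwF 0)
    exact ⟨x, hxD, hxw⟩
  obtain ⟨N0, hN0⟩ : ∃ N0, tl xstar N0 < δ := by
    have := (tl_tendsto xstar).eventually (gt_mem_nhds hδpos)
    exact this.exists
  -- one construction step is always possible
  have hstep : ∀ (k : ℕ) (st : ℕ × (ℕ → lp E 1) × (ℕ → ∀ j, E j →L[ℝ] ℝ)),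
      ∃ (M' : ℕ) (y : lp E 1) (φ : ∀ j, E j →L[ℝ] ℝ),
        y ∈ D ∧ ε ≤ tl y st.1 ∧
        (∀ i, i < k → |mkg (st.2.2 i) y - mkg (st.2.2 i) xstar| < δ * (1/2 : ℝ) ^ i) ∧
        st.1 < M' ∧ tl y M' < δ ∧
        (∀ j, ‖φ j‖ ≤ 1) ∧
        (∀ j, j < st.1 ∨ M' ≤ j → φ j = 0) ∧
        (∀ j, st.1 ≤ j → j < M' → φ j (y j) = ‖y j‖) := by
    intro k st
    set gs : ℕ → lp E 1 →L[ℝ] ℝ := fun i => mkg (st.2.2 i) with hgs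
    set U : Set (WeakSpace ℝ (lp E 1)) := ⋂ i ∈ Finset.range k,
      {z | |gs i ((toWeakSpace ℝ (lp E 1)).symm z) - gs i xstar| < δ * (1/2 : ℝ) ^ i} with hU
    have hUopen : IsOpen U := by
      refine isOpen_biInter_finset fun i _ => ?_
      have hcont : Continuous fun z : WeakSpace ℝ (lp E 1) =>
          |gs i ((toWeakSpace ℝ (lp E 1)).symm z) - gs i xstar| :=
        ((weak_eval_continuous' (gs i)).sub continuous_const).abs
      exact isOpen_lt hcont continuous_const
    have hwU : w ∈ U := by
      refine Set.mem_iInter₂.2 fun i _ => ?_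
      have : (toWeakSpace ℝ (lp E 1)).symm w = xstar := by
        rw [← hxstarw, LinearEquiv.symm_apply_apply]
      simp only [Set.mem_setOf_eq, this, sub_self, abs_zero]
      positivity
    obtain ⟨z, hzU, hzA⟩ := _root_.mem_closure_iff.1 (hwF st.1) U hUopen hwU
    obtain ⟨y, hyA, hyz⟩ := hzA
    have hyD : y ∈ D := hyA.1
    have hytl : ε ≤ tl y st.1 := hyA.2
    have hsymz : (toWeakSpace ℝ (lp E 1)).symm z = y := by
      rw [← hyz, LinearEquiv.symm_apply_apply]
    have hyclose : ∀ i, i < k → |gs i y - gs i xstar| < δ * (1/2 : ℝ) ^ i := by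
      intro i hi
      have := Set.mem_iInter₂.1 hzU i (Finset.mem_range.2 hi)
      rwa [Set.mem_setOf_eq, hsymz] at this
    obtain ⟨M', hM'1, hM'2⟩ : ∃ M', tl y M' < δ ∧ st.1 < M' := by
      have h1 := (tl_tendsto y).eventually (gt_mem_nhds hδpos)
      have h2 := eventually_gt_atTop st.1
      exact (h1.and h2).exists
    refine ⟨M', y, fun j =>
      if h : st.1 ≤ j ∧ j < M' then (exists_dual_vector'' ℝ (y j)).choose else 0,
      hyD, hytl, hyclose, hM'2, hM'1, ?_, ?_, ?_⟩
    · intro j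
      dsimp only
      by_cases h : st.1 ≤ j ∧ j < M'
      · rw [dif_pos h]
        exact (exists_dual_vector'' ℝ (y j)).choose_spec.1
      · rw [dif_neg h]; simp
    · intro j hj
      dsimp only
      rw [dif_neg]
      omega
    · intro j h1 h2
      dsimp only
      rw [dif_pos ⟨h1, h2⟩]
      have := (exists_dual_vector'' ℝ (y j)).choose_spec.2
      simpa using this
  choose sM sy sφ hP1 hP2 hP3 hP4 hP5 hP6 hP7 hP8 using hstep
  -- the recursively constructed sequence
  set state : ℕ → ℕ × (ℕ → lp E 1) × (ℕ → ∀ j, E j →L[ℝ] ℝ) := fun k =>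
    Nat.rec (N0, fun _ => (0 : lp E 1), fun _ _ => 0)
      (fun k st => (sM k st, Function.update st.2.1 k (sy k st),
        Function.update st.2.2 k (sφ k st))) k with hstate
  set M : ℕ → ℕ := fun k => (state k).1 with hMdef
  set Y : ℕ → lp E 1 := fun k => sy k (state k) with hYdef
  set φf : ℕ → ∀ j, E j →L[ℝ] ℝ := fun k => sφ k (state k) with hφfdef
  have hstate_succ : ∀ k, state (k + 1)
      = (sM k (state k), Function.update (state k).2.1 k (Y k),
         Function.update (state k).2.2 k (φf k)) := fun k => rfl
  have hM0 : M 0 = N0 := rfl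
  have hMsucc : ∀ k, M (k + 1) = sM k (state k) := fun k => rfl
  have hhist : ∀ k i, i < k → (state k).2.2 i = φf i := by
    intro k
    induction k with
    | zero => intro i hi; omega
    | succ k ih =>
      intro i hi
      rw [hstate_succ]
      by_cases h : i = k
      · subst h; simp
      · have : i < k := by omega
        simp only [Function.update_of_ne h]
        exact ih i this
  have hg : ∀ i, ∀ j, ‖φf i j‖ ≤ 1 := fun i => hP6 i (state i)
  set g : ℕ → lp E 1 →L[ℝ] ℝ := fun i => Phi (φf i) (hg i) with hgdef
  have hmkg : ∀ i, mkg (φf i) = g i := fun i => mkg_of (φf i) (hg i)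
  -- per-step facts
  have hYD : ∀ k, Y k ∈ D := fun k => hP1 k (state k)
  have hYtl : ∀ k, ε ≤ tl (Y k) (M k) := fun k => hP2 k (state k)
  have hclose : ∀ k i, i < k → |g i (Y k) - g i xstar| < δ * (1/2 : ℝ) ^ i := by
    intro k i hi
    have := hP3 k (state k) i hi
    rwa [hhist k i hi, hmkg i] at this
  have hMlt : ∀ k, M k < M (k + 1) := fun k => hP4 k (state k)
  have hYtl2 : ∀ k, tl (Y k) (M (k + 1)) < δ := fun k => hP5 k (state k)
  have hφsupp : ∀ k j, j < M k ∨ M (k + 1) ≤ j → φf k j = 0 := fun k => hP7 k (state k)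
  have hφnorming : ∀ k j, M k ≤ j → j < M (k + 1) → φf k j (Y k j) = ‖Y k j‖ :=
    fun k => hP8 k (state k)
  have hMmono : StrictMono M := strictMono_nat_of_lt_succ hMlt
  have hMk : ∀ k, k ≤ M k := fun k => hMmono.le_apply
  have hN0M : ∀ k, N0 ≤ M k := fun k => hM0 ▸ hMmono.monotone (Nat.zero_le k)
  -- the combined family of functionals
  set ψall : ∀ j, E j →L[ℝ] ℝ := fun j => ∑ k ∈ Finset.range (j + 1), φf k j with hψall
  have hφdisj : ∀ i k j, i ≠ k → M k ≤ j → j < M (k + 1) → φf i j = 0 := by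
    intro i k j hik h1 h2
    rcases Nat.lt_or_ge i k with h | h
    · refine hφsupp i j (Or.inr ?_)
      exact le_trans (hMmono.monotone h) h1
    · have : k < i := by omega
      refine hφsupp i j (Or.inl ?_)
      exact lt_of_lt_of_le h2 (hMmono.monotone this)
  have hψall_block : ∀ k j, M k ≤ j → j < M (k + 1) → ψall j = φf k j := by
    intro k j h1 h2
    have hkj : k ∈ Finset.range (j + 1) := Finset.mem_range.2 (by
      have := le_trans (hMk k) h1; omega)
    rw [hψall]
    refine Finset.sum_eq_single_of_mem k hkj fun i _ hik => hφdisj i k j hik h1 h2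
  have hψall_low : ∀ j, j < N0 → ψall j = 0 := by
    intro j hj
    rw [hψall]
    refine Finset.sum_eq_zero fun k _ => hφsupp k j (Or.inl (lt_of_lt_of_le hj (hN0M k)))
  have hexists_block : ∀ j, N0 ≤ j → ∃ k, M k ≤ j ∧ j < M (k + 1) := by
    intro j hj
    by_contra hno
    push_neg at hno
    have hall : ∀ k, M k ≤ j := by
      intro k
      induction k with
      | zero => exact hM0 ▸ hj
      | succ k ih => exact hno k ih
    have := hall (j + 1)
    have := hMk (j + 1)
    omega
  have hψnorm : ∀ j, ‖ψall j‖ ≤ 1 := by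
    intro j
    rcases Nat.lt_or_ge j N0 with h | h
    · rw [hψall_low j h]; simp
    · obtain ⟨k, h1, h2⟩ := hexists_block j h
      rw [hψall_block k j h1 h2]
      exact hg k j
  -- tail families
  set ψt : ℕ → ∀ j, E j →L[ℝ] ℝ := fun m j => if M m ≤ j then ψall j else 0 with hψt
  have hψtnorm : ∀ m j, ‖ψt m j‖ ≤ 1 := by
    intro m j
    rw [hψt]
    dsimp only
    split
    · exact hψnorm j
    · simp
  have hψtzero : ∀ m j, j < M m → ψt m j = 0 := by
    intro m j hj
    rw [hψt]
    dsimp only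
    rw [if_neg (by omega)]
  -- decomposition of the total functional
  set f : lp E 1 →L[ℝ] ℝ := Phi ψall hψnorm with hfdef
  have hdec : ∀ (x : lp E 1) (m : ℕ),
      f x = (∑ i ∈ Finset.range m, g i x) + Phi (ψt m) (hψtnorm m) x := by
    intro x m
    have hpt : ∀ j, ψall j (x j)
        = (∑ i ∈ Finset.range m, φf i j (x j)) + ψt m j (x j) := by
      intro j
      rcases Nat.lt_or_ge j (M m) with hj | hj
      · rw [hψtzero m j hj]
        simp only [ContinuousLinearMap.zero_apply, add_zero]
        rcases Nat.lt_or_ge j N0 with hj0 | hj0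
        · rw [hψall_low j hj0]
          rw [Finset.sum_eq_zero fun i _ => by
            rw [hφsupp i j (Or.inl (lt_of_lt_of_le hj0 (hN0M i)))]; rfl]
          simp
        · obtain ⟨k, h1, h2⟩ := hexists_block j hj0
          have hkm : k < m := by
            by_contra hkm
            push_neg at hkm
            have := hMmono.monotone hkm
            omega
          rw [hψall_block k j h1 h2]
          rw [Finset.sum_eq_single_of_mem k (Finset.mem_range.2 hkm)
            (fun i _ hik => by rw [hφdisj i k j hik h1 h2]; rfl)]
      · have hψtj : ψt m j = ψall j := if_pos hj
        rw [hψtj]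
        rw [Finset.sum_eq_zero fun i hi => by
          rw [hφsupp i j (Or.inr (le_trans (hMmono.monotone (Finset.mem_range.1 hi)) hj))]
          rfl]
        simp
    have hsummand : ∀ i ∈ Finset.range m, Summable fun j => φf i j (x j) :=
      fun i _ => summable_dual_apply (φf i) (hg i) x
    calc f x = ∑' j, ψall j (x j) := rfl
    _ = ∑' j, ((∑ i ∈ Finset.range m, φf i j (x j)) + ψt m j (x j)) := tsum_congr hpt
    _ = (∑' j, ∑ i ∈ Finset.range m, φf i j (x j)) + ∑' j, ψt m j (x j) :=
        Summable.tsum_add (summable_sum hsummand) (summable_dual_apply (ψt m) (hψtnorm m) x)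
    _ = (∑ i ∈ Finset.range m, ∑' j, φf i j (x j)) + ∑' j, ψt m j (x j) := by
        rw [Summable.tsum_finsetSum hsummand]
    _ = (∑ i ∈ Finset.range m, g i x) + Phi (ψt m) (hψtnorm m) x := rfl
  -- block representation of g i
  have hg_eq_sum : ∀ i (x : lp E 1),
      g i x = ∑ j ∈ Finset.Ico (M i) (M (i + 1)), φf i j (x j) := by
    intro i x
    refine phi_eq_sum (φf i) (hg i) (fun j hj => ?_) x
    refine hφsupp i j ?_
    rw [Finset.mem_Ico] at hj
    omega
  have hgblock : ∀ i (x : lp E 1), |g i x| ≤ tl x (M i) - tl x (M (i + 1)) := by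
    intro i x
    rw [hg_eq_sum i x, ← sum_Ico_eq_tl x (le_of_lt (hMlt i))]
    exact abs_sum_dual_le (φf i) (hg i) _ x
  have hsum_gxstar : ∀ m, ∑ i ∈ Finset.range m, |g i xstar| ≤ δ := by
    intro m
    calc ∑ i ∈ Finset.range m, |g i xstar|
        ≤ ∑ i ∈ Finset.range m, (tl xstar (M i) - tl xstar (M (i + 1))) :=
          Finset.sum_le_sum fun i _ => hgblock i xstar
    _ = tl xstar (M 0) - tl xstar (M m) :=
          Finset.sum_range_sub' (fun i => tl xstar (M i)) m
    _ ≤ tl xstar N0 := by rw [hM0]; linarith [tl_nonneg xstar (M m)]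
    _ ≤ δ := le_of_lt hN0
  have hpow : ∀ m, ∑ i ∈ Finset.range m, δ * (1/2 : ℝ) ^ i ≤ 2 * δ := by
    intro m
    rw [← Finset.mul_sum]
    have h1 : ∑ i ∈ Finset.range m, (1/2 : ℝ) ^ i ≤ 2 := by
      have h2 := Summable.sum_le_tsum (Finset.range m) (fun i _ => by positivity)
        summable_geometric_two
      rwa [tsum_geometric_two] at h2
    calc δ * ∑ i ∈ Finset.range m, (1/2 : ℝ) ^ i ≤ δ * 2 :=
          mul_le_mul_of_nonneg_left h1 (le_of_lt hδpos)
    _ = 2 * δ := by ring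
  have hsum3 : ∀ (m : ℕ) (v : lp E 1),
      (∀ i, i < m → |g i v - g i xstar| ≤ δ * (1/2 : ℝ) ^ i) →
      |∑ i ∈ Finset.range m, g i v| ≤ 3 * δ := by
    intro m v hv
    calc |∑ i ∈ Finset.range m, g i v| ≤ ∑ i ∈ Finset.range m, |g i v| :=
          Finset.abs_sum_le_sum_abs _ _
    _ ≤ ∑ i ∈ Finset.range m, (|g i xstar| + δ * (1/2 : ℝ) ^ i) := by
        refine Finset.sum_le_sum fun i hi => ?_
        have h1 := hv i (Finset.mem_range.1 hi)
        calc |g i v| = |g i xstar + (g i v - g i xstar)| := by ring_nf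
        _ ≤ |g i xstar| + |g i v - g i xstar| := abs_add_le _ _
        _ ≤ |g i xstar| + δ * (1/2 : ℝ) ^ i := by linarith
    _ = (∑ i ∈ Finset.range m, |g i xstar|) + ∑ i ∈ Finset.range m, δ * (1/2 : ℝ) ^ i :=
        Finset.sum_add_distrib
    _ ≤ δ + 2 * δ := add_le_add (hsum_gxstar m) (hpow m)
    _ = 3 * δ := by ring
  -- lower bound along the sequence
  have hfY : ∀ k, ε - 5 * δ ≤ f (Y k) := by
    intro k
    have h1 := hdec (Y k) (k + 1)
    rw [Finset.sum_range_succ] at h1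
    have h2 : |∑ i ∈ Finset.range k, g i (Y k)| ≤ 3 * δ :=
      hsum3 k (Y k) fun i hi => le_of_lt (hclose k i hi)
    have h3 : ε - δ ≤ g k (Y k) := by
      have hb : g k (Y k) = tl (Y k) (M k) - tl (Y k) (M (k + 1))  := by
        rw [hg_eq_sum k (Y k), ← sum_Ico_eq_tl (Y k) (le_of_lt (hMlt k))]
        refine Finset.sum_congr rfl fun j hj => ?_
        rw [Finset.mem_Ico] at hj
        exact hφnorming k j hj.1 hj.2
      rw [hb]
      linarith [hYtl k, hYtl2 k]
    have h4 : |Phi (ψt (k + 1)) (hψtnorm (k + 1)) (Y k)| ≤ tl (Y k) (M (k + 1)) :=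
      phi_abs_le_tl (ψt (k + 1)) (hψtnorm (k + 1)) (hψtzero (k + 1)) (Y k)
    have h5 := hYtl2 k
    have h2' := (abs_le.1 h2).1
    have h4' := (abs_le.1 h4).1
    linarith
  -- cluster point of the sequence
  set seq : ℕ → WeakSpace ℝ (lp E 1) := fun k => toWeakSpace ℝ (lp E 1) (Y k) with hseq
  have hmapK : Filter.map seq atTop ≤ Filter.principal K := by
    refine Filter.le_principal_iff.2 ?_
    refine Filter.mem_map.2 (Filter.Eventually.of_forall fun k => ?_)
    exact ⟨Y k, hYD k, rfl⟩
  obtain ⟨w', hw'K, hw'cl⟩ := hc.exists_clusterPt hmapK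
  obtain ⟨ydag, hydagD, hydagw⟩ := hw'K
  have cluster_val : ∀ (φc : WeakSpace ℝ (lp E 1) → ℝ), Continuous φc →
      ∀ s : Set ℝ, IsClosed s → (∀ᶠ k in atTop, φc (seq k) ∈ s) → φc w' ∈ s := by
    intro φc hφc s hs hev
    have h1 : ClusterPt (φc w') (Filter.map φc (Filter.map seq atTop)) :=
      hw'cl.map hφc.continuousAt Filter.tendsto_map
    have h2 : Filter.map φc (Filter.map seq atTop) ≤ Filter.principal s := by
      rw [Filter.map_map]
      exact Filter.le_principal_iff.2 (Filter.mem_map.2 hev)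
    have h3 := h1.mono h2
    have h4 : φc w' ∈ closure s := mem_closure_iff_clusterPt.2 h3
    rwa [hs.closure_eq] at h4
  have hsymm_w' : (toWeakSpace ℝ (lp E 1)).symm w' = ydag := by
    rw [← hydagw, LinearEquiv.symm_apply_apply]
  -- lower bound for the limit
  have hflow : ε - 5 * δ ≤ f ydag := by
    have h := cluster_val (fun z => f ((toWeakSpace ℝ (lp E 1)).symm z))
      (weak_eval_continuous' f) (Set.Ici (ε - 5 * δ)) isClosed_Ici
      (Filter.Eventually.of_forall fun k => by
        simpa [hseq, LinearEquiv.symm_apply_apply] using hfY k)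
    rw [hsymm_w'] at h
    exact h
  -- coordinates of the limit are close to those of xstar
  have hgydag : ∀ i, |g i ydag - g i xstar| ≤ δ * (1/2 : ℝ) ^ i := by
    intro i
    have h := cluster_val (fun z => g i ((toWeakSpace ℝ (lp E 1)).symm z))
      (weak_eval_continuous' (g i))
      (Metric.closedBall (g i xstar) (δ * (1/2 : ℝ) ^ i)) Metric.isClosed_closedBall ?_
    · rw [hsymm_w'] at h
      rwa [Metric.mem_closedBall, Real.dist_eq] at h
    · filter_upwards [eventually_gt_atTop i] with k hk
      simp only [hseq, LinearEquiv.symm_apply_apply, Metric.mem_closedBall, Real.dist_eq]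
      exact le_of_lt (hclose k i hk)
  -- upper bound for the limit
  have hupper : ∀ m, f ydag ≤ 3 * δ + tl ydag (M m) := by
    intro m
    have h1 := hdec ydag m
    have h2 := hsum3 m ydag fun i _ => hgydag i
    have h3 : |Phi (ψt m) (hψtnorm m) ydag| ≤ tl ydag (M m) :=
      phi_abs_le_tl (ψt m) (hψtnorm m) (hψtzero m) ydag
    have h2' := (abs_le.1 h2).2
    have h3' := (abs_le.1 h3).2
    linarith
  have htail0 : Tendsto (fun m => tl ydag (M m)) atTop (𝓝 0) := by
    refine tendsto_of_tendsto_of_tendsto_of_le_of_le tendsto_const_nhds (tl_tendsto ydag)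
      (fun m => tl_nonneg ydag (M m)) (fun m => tl_anti ydag (hMk m))
  have hfhigh : f ydag ≤ 3 * δ := by
    have htend : Tendsto (fun m => 3 * δ + tl ydag (M m)) atTop (𝓝 (3 * δ + 0)) :=
      tendsto_const_nhds.add htail0
    have := ge_of_tendsto' htend hupper
    linarith [this]
  rw [hδdef] at hflow hfhigh
  linarith




theorem stmt_5_aux (C : ℝ) (hC : ∀ j, HasWAPWith (E j) C) :
    ∃ C' : ℝ, HasWAPWith (lp E 1) C' := by
  -- C is nonnegative
  have hC0 : 0 ≤ C := by
    obtain ⟨V, -, hV, -⟩ := hC 0 ∅ (by simp [IsWeaklyCompact, isCompact_empty]) 1 one_pos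
    exact (norm_nonneg V).trans hV
  refine ⟨C, ?_⟩
  intro D hD ε hε
  obtain ⟨N, hN⟩ := unif_tail D hD (half_pos hε)
  -- the coordinate images are weakly compact
  have hDj : ∀ j, IsWeaklyCompact (projCLM j '' D) := by
    intro j
    have key : toWeakSpace ℝ (E j) '' (projCLM j '' D)
        = WeakSpace.map (projCLM (E := E) j) '' (toWeakSpace ℝ (lp E 1) '' D) := by
      rw [Set.image_image, Set.image_image]
      rfl
    rw [IsWeaklyCompact, key]
    exact hD.image (WeakSpace.map (projCLM (E := E) j)).continuous
  set ε' : ℝ := ε / (2 * (N + 1)) with hε'def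
  have hε' : 0 < ε' := by positivity
  choose V hVwc hVnorm hVapprox using fun j => hC j (projCLM j '' D) (hDj j) ε' hε'
  set Wop : lp E 1 →L[ℝ] lp E 1 :=
    ∑ j ∈ Finset.range N, (inclCLM j).comp ((V j).comp (projCLM j)) with hWop
  -- coordinates of Wop
  have hcoord : ∀ (x : lp E 1) (k : ℕ),
      (Wop x : ∀ i, E i) k = if k ∈ Finset.range N then V k (x k) else 0 := by
    intro x k
    have h1 : Wop x = ∑ j ∈ Finset.range N, lp.single 1 j (V j (x j)) := by
      rw [hWop]; simp [ContinuousLinearMap.sum_apply]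
    rw [h1, lp.coeFn_sum, Finset.sum_apply]
    by_cases hk : k ∈ Finset.range N
    · rw [if_pos hk]
      rw [Finset.sum_eq_single_of_mem k hk
        (fun j _ hj => lp.single_apply_ne 1 j _ (Ne.symm hj))]
      exact lp.single_apply_self 1 k _
    · rw [if_neg hk]
      exact Finset.sum_eq_zero fun j hj => lp.single_apply_ne 1 j _
        (fun h => hk (h ▸ hj))
  refine ⟨Wop, ?_, ?_, ?_⟩
  · -- weak compactness
    -- compact summands
    set S : ℕ → Set (WeakSpace ℝ (lp E 1)) := fun j =>
      WeakSpace.map (inclCLM (E := E) j) ''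
        closure (toWeakSpace ℝ (E j) '' (V j '' Metric.closedBall 0 1)) with hS
    have hScomp : ∀ j, IsCompact (S j) := fun j =>
      (hVwc j).image (WeakSpace.map (inclCLM (E := E) j)).continuous
    -- iterated sumsets
    have hAcomp : ∀ m, IsCompact (sumSets S m) := by
      intro m
      induction m with
      | zero => exact isCompact_singleton
      | succ m ih => exact ih.add (hScomp m)
    have hmem : ∀ x ∈ Metric.closedBall (0 : lp E 1) 1,
        toWeakSpace ℝ (lp E 1) (Wop x) ∈ sumSets S N := by
      intro x hx
      have hxn : ‖x‖ ≤ 1 := by rwa [Metric.mem_closedBall, dist_zero_right] at hx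
      have h1 : Wop x = ∑ j ∈ Finset.range N, lp.single 1 j (V j (x j)) := by
        rw [hWop]; simp [ContinuousLinearMap.sum_apply]
      have h2 : toWeakSpace ℝ (lp E 1) (Wop x)
          = ∑ j ∈ Finset.range N, toWeakSpace ℝ (lp E 1) (lp.single 1 j (V j (x j))) := by
        rw [h1, map_sum]
      rw [h2]
      have key : ∀ m : ℕ,
          (∑ j ∈ Finset.range m, toWeakSpace ℝ (lp E 1) (lp.single 1 j (V j (x j))))
            ∈ sumSets S m := by
        intro m
        induction m with
        | zero => simp [sumSets]
        | succ m ih =>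
          rw [Finset.sum_range_succ]
          show _ ∈ sumSets S m + S m
          refine Set.add_mem_add ih ?_
          rw [hS]
          refine ⟨toWeakSpace ℝ (E m) (V m (x m)), ?_, rfl⟩
          refine subset_closure ⟨V m (x m), ⟨x m, ?_, rfl⟩, rfl⟩
          rw [Metric.mem_closedBall, dist_zero_right]
          exact (lp.norm_apply_le_norm (by norm_num) x m).trans hxn
      exact key N
    refine IsCompact.of_isClosed_subset (hAcomp N) isClosed_closure ?_
    refine closure_minimal ?_ (hAcomp N).isClosed
    rintro - ⟨-, ⟨x, hx, rfl⟩, rfl⟩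
    exact hmem x hx
  · -- norm bound
    refine ContinuousLinearMap.opNorm_le_bound Wop hC0 fun x => ?_
    have hfin : ∀ k ∉ Finset.range N, ‖(Wop x : ∀ i, E i) k‖ = 0 := by
      intro k hk
      rw [hcoord x k, if_neg hk, norm_zero]
    have hsum : HasSum (fun k => ‖(Wop x : ∀ i, E i) k‖)
        (∑ k ∈ Finset.range N, ‖(Wop x : ∀ i, E i) k‖) :=
      hasSum_sum_of_ne_finset_zero hfin
    have hval : ‖Wop x‖ = ∑ k ∈ Finset.range N, ‖(Wop x : ∀ i, E i) k‖ :=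
      (hasSum_norm1 (Wop x)).unique hsum
    rw [hval]
    calc ∑ k ∈ Finset.range N, ‖(Wop x : ∀ i, E i) k‖
        ≤ ∑ k ∈ Finset.range N, C * ‖x k‖ := by
          refine Finset.sum_le_sum fun k hk => ?_
          rw [hcoord x k, if_pos hk]
          exact ((V k).le_opNorm _).trans (by gcongr; exact hVnorm k)
      _ = C * ∑ k ∈ Finset.range N, ‖x k‖ := by rw [Finset.mul_sum]
      _ ≤ C * ‖x‖ := by
          refine mul_le_mul_of_nonneg_left ?_ hC0
          exact sum_le_hasSum _ (fun k _ => norm_nonneg _) (hasSum_norm1 x)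
  · -- approximation
    intro x hx
    have hsub : ∀ k, ((x - Wop x : lp E 1) : ∀ i, E i) k = x k - (Wop x : ∀ i, E i) k := by
      intro k; rw [lp.coeFn_sub]; rfl
    have hrepr : ‖x - Wop x‖
        = ∑ k ∈ Finset.range N, ‖((x - Wop x : lp E 1) : ∀ i, E i) k‖ + tl (x - Wop x) N :=
      (sum_range_add_tl _ N).symm
    have htail : tl (x - Wop x) N = tl x N := by
      refine tsum_congr fun j => ?_
      rw [hsub, hcoord, if_neg (by simp), sub_zero]
    have hhead : ∑ k ∈ Finset.range N, ‖((x - Wop x : lp E 1) : ∀ i, E i) k‖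
        ≤ N * ε' := by
      calc ∑ k ∈ Finset.range N, ‖((x - Wop x : lp E 1) : ∀ i, E i) k‖
          ≤ ∑ k ∈ Finset.range N, ε' := by
            refine Finset.sum_le_sum fun k hk => ?_
            rw [hsub, hcoord, if_pos hk]
            exact le_of_lt (hVapprox k (x k) ⟨x, hx, rfl⟩)
        _ = N * ε' := by rw [Finset.sum_const, Finset.card_range, nsmul_eq_mul]
    have hNe : (N : ℝ) * ε' < ε / 2 := by
      rw [hε'def]
      have hpos : (0:ℝ) < 2 * ((N:ℝ) + 1) := by positivity
      have heq : (N:ℝ) * (ε / (2 * ((N:ℝ) + 1))) = ((N:ℝ) * ε) / (2 * ((N:ℝ) + 1)) := by ring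
      rw [heq, div_lt_div_iff₀ hpos two_pos]
      nlinarith [hε, (Nat.cast_nonneg N : (0:ℝ) ≤ (N:ℝ))]
    rw [hrepr, htail]
    linarith [hN x hx, hhead, hNe]

end Aux

/-- If each `E_j` has the W.A.P. with a common uniform constant `C`, then the `ℓ¹`-direct
sum `ℓ¹(E_j)` has the W.A.P. -/
theorem stmt_5 {E : ℕ → Type*} [∀ j, NormedAddCommGroup (E j)] [∀ j, NormedSpace ℝ (E j)]
    [∀ j, CompleteSpace (E j)]
    (C : ℝ) (hC : ∀ j, HasWAPWith (E j) C) :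
    ∃ C' : ℝ, HasWAPWith (lp E 1) C' := by
  exact stmt_5_aux C hC
end

section
/- Let E be a Banach space with the Dunford–Pettis property and suppose E contains an infinite-dimensional reflexive closed subspace M. Then E fails to have the weakly compact approximation property (even the unbounded one): there exists a weakly compact set D ⊆ E and ε > 0 such that no weakly compact operator V : E → E satisfies sup_{x∈D} ‖x − Vx‖ < ε. -/
open Filter Topology

section aux
variable {E : Type*} [NormedAddCommGroup E] [NormedSpace ℝ E]

theorem pairingFlip_injective : Function.Injective ((topDualPairing ℝ E).flip) := by
  intro a b h
  have h0 : ∀ f : StrongDual ℝ E, f (a - b) = 0 := by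
    intro f
    have := congrArg (fun g => g f) h
    simp only [LinearMap.flip_apply, topDualPairing_apply] at this
    simp [map_sub, this]
  have := NormedSpace.eq_zero_of_forall_dual_eq_zero ℝ h0
  exact sub_eq_zero.mp this

noncomputable instance : T2Space (WeakSpace ℝ E) :=
  (WeakBilin.isEmbedding pairingFlip_injective).t2Space

theorem isClosed_image_toWeakSpace_of_submodule (N : Submodule ℝ E)
    (hN : IsClosed (N : Set E)) :
    IsClosed (toWeakSpace ℝ E '' (N : Set E)) := by
  have h := (N.convex).toWeakSpace_closure (𝕜 := ℝ)
  rw [hN.closure_eq] at h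
  rw [h]
  exact isClosed_closure

end aux


/-- A sequence is weakly null if it tends to `0` in the weak topology. -/
def WeaklyNull {E : Type*} [NormedAddCommGroup E] [NormedSpace ℝ E] (x : ℕ → E) : Prop :=
  Tendsto (fun n => toWeakSpace ℝ E (x n)) atTop (nhds 0)

/-- `E` has the Dunford–Pettis property: weakly compact operators out of `E` map weakly
null sequences to norm-null sequences. -/
def HasDPP (E : Type) [NormedAddCommGroup E] [NormedSpace ℝ E] : Prop :=
  ∀ (F : Type) (_ : NormedAddCommGroup F), ∀ (_ : NormedSpace ℝ F) (_ : CompleteSpace F),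
    ∀ V : E →L[ℝ] F, IsWeaklyCompactOp V →
      ∀ x : ℕ → E, WeaklyNull x → Tendsto (fun n => ‖V (x n)‖) atTop (nhds 0)

/-- If `E` is a Banach space with the Dunford–Pettis property containing an
infinite-dimensional reflexive closed subspace `M` (its unit ball is weakly compact),
then `E` fails the weakly compact approximation property, even without a uniform bound:
there is a weakly compact set `D` and `ε > 0` such that no weakly compact operator `V`
on `E` satisfies `sup_{x ∈ D} ‖x - Vx‖ < ε`. -/
theorem stmt_9 {E : Type} [NormedAddCommGroup E] [NormedSpace ℝ E] [CompleteSpace E]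
    (hDPP : HasDPP E)
    (M : Submodule ℝ E) (hMclosed : IsClosed (M : Set E))
    (hMinf : ¬ FiniteDimensional ℝ M)
    (hMrefl : IsWeaklyCompact {x : E | x ∈ M ∧ ‖x‖ ≤ 1}) :
    ∃ D : Set E, IsWeaklyCompact D ∧ ∃ ε : ℝ, 0 < ε ∧
      ∀ V : E →L[ℝ] E, IsWeaklyCompactOp V → ∃ x ∈ D, ε ≤ ‖x - V x‖ := by
  classical
  set D : Set E := {x : E | x ∈ M ∧ ‖x‖ ≤ 1} with hDdef
  refine ⟨D, hMrefl, 1/100, by norm_num, ?_⟩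
  intro V hV
  by_contra hcon
  push_neg at hcon
  -- hcon : ∀ x ∈ D, ‖x - V x‖ < 1/100
  -- Step 1: a (1/3)-separated sequence in the unit ball of M.
  obtain ⟨f, hfnorm, hfsep⟩ :=
    exists_seq_norm_le_one_le_norm_sub' (𝕜 := ℝ) (E := M) (c := (2 : ℝ))
      (by norm_num) (R := 3) (by norm_num) hMinf
  set x : ℕ → E := fun n => (3 : ℝ)⁻¹ • ((f n : E)) with hxdef
  have hxM : ∀ n, x n ∈ M := fun n => M.smul_mem _ (f n).2
  have hxnorm : ∀ n, ‖x n‖ ≤ 1 := by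
    intro n
    have h1 : ‖(f n : E)‖ ≤ 3 := hfnorm n
    have : ‖x n‖ = 3⁻¹ * ‖(f n : E)‖ := by
      rw [hxdef]; simp [norm_smul]
    rw [this]; nlinarith [norm_nonneg (f n : E)]
  have hxD : ∀ n, x n ∈ D := fun n => ⟨hxM n, hxnorm n⟩
  have hxsep : ∀ m n, m ≠ n → (1 : ℝ)/3 ≤ ‖x m - x n‖ := by
    intro m n hmn
    have h1 : (1 : ℝ) ≤ ‖f m - f n‖ := hfsep hmn
    have h2 : ‖(f m : E) - (f n : E)‖ = ‖f m - f n‖ := by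
      rw [← Submodule.coe_sub]; rfl
    have : x m - x n = (3 : ℝ)⁻¹ • ((f m : E) - (f n : E)) := by
      rw [hxdef]; rw [smul_sub]
    rw [this, norm_smul]
    rw [h2]
    simp only [norm_inv, Real.norm_ofNat]
    nlinarith
  -- Step 2: a separable closed subspace containing the sequence.
  set N : Submodule ℝ E := (Submodule.span ℝ (Set.range x)).topologicalClosure with hNdef
  have hxN : ∀ n, x n ∈ N := fun n =>
    Submodule.le_topologicalClosure _ (Submodule.subset_span ⟨n, rfl⟩)
  have hNclosed : IsClosed (N : Set E) := Submodule.isClosed_topologicalClosure _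
  have hNsep : TopologicalSpace.IsSeparable (N : Set E) := by
    have h1 : TopologicalSpace.IsSeparable ((Submodule.span ℝ (Set.range x) : Submodule ℝ E) : Set E) :=
      (Set.countable_range x).isSeparable.span
    have h2 := h1.closure
    rwa [hNdef, Submodule.topologicalClosure_coe]
  obtain ⟨c, hc_count, hc_sub⟩ := hNsep
  have hc_ne : c.Nonempty := by
    rcases Set.eq_empty_or_nonempty c with h | h
    · exfalso
      have h0 : (0 : E) ∈ closure c := hc_sub N.zero_mem
      rw [h, closure_empty] at h0
      exact h0
    · exact h
  obtain ⟨u, hu⟩ := Set.Countable.exists_eq_range hc_count hc_ne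
  have hNu : (N : Set E) ⊆ closure (Set.range u) := by rw [← hu]; exact hc_sub
  -- Step 3: a countable norming family of functionals.
  have hFj : ∀ j, ∃ g : E →L[ℝ] ℝ, ‖g‖ ≤ 1 ∧ (u j ≠ 0 → g (u j) = ‖u j‖) := by
    intro j
    by_cases h : u j = 0
    · exact ⟨0, by simp, fun h' => absurd h h'⟩
    · obtain ⟨g, hg1, hg2⟩ := exists_dual_vector ℝ (u j) (norm_ne_zero_iff.mpr h)
      exact ⟨g, le_of_eq hg1, fun _ => hg2⟩
  choose F hF1 hF2 using hFj
  have hsepN : ∀ z ∈ N, (∀ j, F j z = 0) → z = 0 := by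
    intro z hz hzero
    by_contra hz0
    have hzpos : (0 : ℝ) < ‖z‖ := norm_pos_iff.mpr hz0
    have hcl : z ∈ closure (Set.range u) := hNu hz
    obtain ⟨w, ⟨j, rfl⟩, hw⟩ := Metric.mem_closure_iff.mp hcl (‖z‖/3) (by positivity)
    rw [dist_eq_norm] at hw
    have huj : u j ≠ 0 := by
      intro h0
      rw [h0, sub_zero] at hw
      linarith
    have h2 : F j (u j) = ‖u j‖ := hF2 j huj
    have h3 : |F j (z - u j)| ≤ ‖z - u j‖ := by
      calc |F j (z - u j)| = ‖F j (z - u j)‖ := (Real.norm_eq_abs _).symm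
        _ ≤ ‖F j‖ * ‖z - u j‖ := (F j).le_opNorm _
        _ ≤ 1 * ‖z - u j‖ := by
            have := norm_nonneg (z - u j); nlinarith [hF1 j]
        _ = ‖z - u j‖ := one_mul _
    have h4 : F j z = F j (u j) + F j (z - u j) := by
      rw [map_sub]; ring
    rw [hzero j, h2] at h4
    have h5 : ‖z‖ - ‖z - u j‖ ≤ ‖u j‖ := by
      have := norm_sub_norm_le z (u j)
      linarith [this]
    have h6 := abs_le.mp h3
    linarith [h6.1, h6.2]
  -- Step 4: the weakly compact set K = image of (D ∩ N).
  set K : Set (WeakSpace ℝ E) := toWeakSpace ℝ E '' (D ∩ (N : Set E)) with hKdef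
  have hKcomp : IsCompact K := by
    have himg : toWeakSpace ℝ E '' (D ∩ (N : Set E)) =
        (toWeakSpace ℝ E '' D) ∩ (toWeakSpace ℝ E '' (N : Set E)) :=
      Set.image_inter (toWeakSpace ℝ E).injective
    rw [hKdef, himg]
    exact hMrefl.inter_right (isClosed_image_toWeakSpace_of_submodule N hNclosed)
  haveI hKcs : CompactSpace K := isCompact_iff_compactSpace.mp hKcomp
  -- Step 5: sequential compactness of K via embedding into ℝ^ℕ.
  set T : K → (ℕ → ℝ) := fun z j => (topDualPairing ℝ E).flip (z : WeakSpace ℝ E) (F j) with hTdef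
  have hTcont : Continuous T := by
    apply continuous_pi
    intro j
    exact (WeakBilin.eval_continuous _ (F j)).comp continuous_subtype_val
  have hTinj : Function.Injective T := by
    rintro ⟨z1, hz1⟩ ⟨z2, hz2⟩ h
    obtain ⟨a, ha, rfl⟩ := hz1
    obtain ⟨b, hb, rfl⟩ := hz2
    have hab : ∀ j, F j (a - b) = 0 := by
      intro j
      have hj := congrFun h j
      simp only [hTdef, LinearMap.flip_apply, topDualPairing_apply] at hj
      have hj' : F j a = F j b := hj
      rw [map_sub, hj', sub_self]
    have := hsepN (a - b) (N.sub_mem ha.2 hb.2) hab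
    have hab' : a = b := sub_eq_zero.mp this
    simp [hab']
  have hTembed := hTcont.isClosedEmbedding hTinj
  haveI : FirstCountableTopology K := hTembed.toIsEmbedding.firstCountableTopology
  -- the sequence in K
  have hmemK : ∀ n, toWeakSpace ℝ E (x n) ∈ K := fun n =>
    ⟨x n, ⟨hxD n, hxN n⟩, rfl⟩
  obtain ⟨a, φ, hφ, hconv⟩ :=
    SeqCompactSpace.tendsto_subseq (X := K) (fun n => ⟨toWeakSpace ℝ E (x n), hmemK n⟩)
  obtain ⟨x', hx'DN, hx'z⟩ := a.2
  have hconv' : Tendsto (fun n => toWeakSpace ℝ E (x (φ n))) atTop (𝓝 (a : WeakSpace ℝ E)) := by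
    have := (continuous_subtype_val.tendsto a).comp hconv
    exact this
  -- Step 6: weakly null sequence.
  set y : ℕ → E := fun n => x (φ n) - x' with hydef
  have hynull : WeaklyNull y := by
    have h1 : Tendsto (fun n => toWeakSpace ℝ E (x (φ n)) - toWeakSpace ℝ E x') atTop
        (𝓝 ((a : WeakSpace ℝ E) - (a : WeakSpace ℝ E))) := by
      apply hconv'.sub
      rw [hx'z]
      exact tendsto_const_nhds
    rw [sub_self] at h1
    have h2 : (fun n => toWeakSpace ℝ E (y n)) =
        fun n => toWeakSpace ℝ E (x (φ n)) - toWeakSpace ℝ E x' := by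
      funext n
      rw [hydef]
      exact map_sub (toWeakSpace ℝ E).toLinearMap _ _
    unfold WeaklyNull
    rw [h2]
    exact h1
  -- Step 7: apply the Dunford–Pettis property.
  have hVnull : Tendsto (fun n => ‖V (y n)‖) atTop (𝓝 0) :=
    hDPP E inferInstance inferInstance inferInstance V hV y hynull
  -- Step 8: quantitative contradiction.
  have hx'D : x' ∈ D := hx'DN.1
  have hybd : ∀ n, ‖y n - V (y n)‖ < 2/100 := by
    intro n
    have h1 := hcon _ (hxD (φ n))
    have h2 := hcon _ hx'D
    have heq : y n - V (y n) = (x (φ n) - V (x (φ n))) - (x' - V x') := by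
      rw [hydef]
      simp only [map_sub]
      abel
    rw [heq]
    calc ‖(x (φ n) - V (x (φ n))) - (x' - V x')‖
        ≤ ‖x (φ n) - V (x (φ n))‖ + ‖x' - V x'‖ := norm_sub_le _ _
      _ < 2/100 := by linarith
  have hev : ∀ᶠ n in atTop, ‖V (y n)‖ < 1/100 :=
    hVnull.eventually_lt_const (by norm_num)
  obtain ⟨N0, hN0⟩ := eventually_atTop.mp hev
  have hyb : ∀ n, N0 ≤ n → ‖y n‖ < 3/100 := by
    intro n hn
    have h1 : ‖y n‖ ≤ ‖y n - V (y n)‖ + ‖V (y n)‖ := by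
      calc ‖y n‖ = ‖(y n - V (y n)) + V (y n)‖ := by rw [sub_add_cancel]
        _ ≤ ‖y n - V (y n)‖ + ‖V (y n)‖ := norm_add_le _ _
    linarith [hybd n, hN0 n hn]
  have hne : φ N0 ≠ φ (N0 + 1) := fun h => by
    have := hφ.injective h
    omega
  have hsep' := hxsep (φ N0) (φ (N0 + 1)) hne
  have heq2 : x (φ N0) - x (φ (N0 + 1)) = y N0 - y (N0 + 1) := by
    rw [hydef]
    exact (sub_sub_sub_cancel_right _ _ _).symm
  rw [heq2] at hsep'
  have := norm_sub_le (y N0) (y (N0 + 1))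
  have hb1 := hyb N0 le_rfl
  have hb2 := hyb (N0 + 1) (Nat.le_succ N0)
  linarith
end
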